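/- arXiv:1303.7361 — 8 statements merged into one kernel-verified Lean document; each statement's English description precedes it below -/
import Mathlib

section
/- Let n ≥ 1 and let R : (Fin n → Fin 2) → ℂ be a tensor of arity n on domain size 2. Then R is degenerate if and only if for every position t ∈ Fin n the t-th signature matrix A_R(t) has rank at most 1. -/
open Matrix BigOperators

/-- A tensor of arity `n` on domain size `k` is degenerate if it is a tensor
product of vectors. -/
def Degenerate {n k : ℕ} (R : (Fin n → Fin k) → ℂ) : Prop :=
  ∃ v : Fin n → (Fin k → ℂ), ∀ i, R i = ∏ t, v t (i t)

/-- The recognizer transform `R̲ M^{⊗n}` of a tensor `R̲` on domain `D`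
under a matrix `M` with rows indexed by `D` and columns indexed by `E`. -/
noncomputable def rtrans {n : ℕ} {D E : Type*} [Fintype D] (M : Matrix D E ℂ)
    (R : (Fin n → D) → ℂ) : (Fin n → E) → ℂ :=
  fun i => ∑ j : Fin n → D, R j * ∏ t, M (j t) (i t)

/-- The generator transform `M^{⊗n} G` of a column tensor `G` on domain `E`
under a matrix `M` with rows indexed by `D` and columns indexed by `E`. -/
noncomputable def gtrans {n : ℕ} {D E : Type*} [Fintype E] (M : Matrix D E ℂ)
    (G : (Fin n → E) → ℂ) : (Fin n → D) → ℂ :=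
  fun s => ∑ i : Fin n → E, (∏ t, M (s t) (i t)) * G i

/-- The restriction `R^{(σ,τ)}` of a tensor on domain size `k` to `{σ, τ}`. -/
def restrict {n k : ℕ} (R : (Fin n → Fin k) → ℂ) (σ τ : Fin k) :
    (Fin n → Fin 2) → ℂ :=
  fun j => R fun t => if j t = 0 then σ else τ

/-- The submatrix `(α_σ α_τ)` formed by the columns `σ` and `τ` of `M`. -/
def subM {D : Type*} {k : ℕ} (M : Matrix D (Fin k) ℂ) (σ τ : Fin k) :
    Matrix D (Fin 2) ℂ :=
  Matrix.of fun i c => if c = 0 then M i σ else M i τ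

/-- The `t`-th signature matrix `A_R(t)` of a tensor on domain size 2. -/
def sigMatrix {n : ℕ} (R : (Fin n → Fin 2) → ℂ) (t : Fin n) :
    Matrix (Fin 2) ({s : Fin n // s ≠ t} → Fin 2) ℂ :=
  Matrix.of fun b i => R fun s => if h : s = t then b else i ⟨s, h⟩

/-- The two-column matrix `A_{σ,τ}(R)`, with rows indexed by a position `t`
and an assignment of domain values to the remaining positions. -/
def Amat {n k : ℕ} (R : (Fin n → Fin k) → ℂ) (σ τ : Fin k) :
    Matrix (Σ t : Fin n, ({s : Fin n // s ≠ t} → Fin k)) (Fin 2) ℂ :=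
  Matrix.of fun p c =>
    R fun s => if h : s = p.1 then (if c = 0 then σ else τ) else p.2 ⟨s, h⟩

/-- The column vector `b_w(R)`. -/
def bvec {n k : ℕ} (R : (Fin n → Fin k) → ℂ) (w : Fin k) :
    (Σ t : Fin n, ({s : Fin n // s ≠ t} → Fin k)) → ℂ :=
  fun p => R fun s => if h : s = p.1 then w else p.2 ⟨s, h⟩

/-- The `2 × k` matrix `[[1,0,0,…,0],[0,1,0,…,0]]`. -/
def projMat (k : ℕ) : Matrix (Fin 2) (Fin k) ℂ :=
  Matrix.of fun r c => if (r : ℕ) = (c : ℕ) then 1 else 0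

lemma aux_minor {γ : Type*} [Fintype γ] [DecidableEq γ]
    (A : Matrix (Fin 2) γ ℂ) (h : A.rank ≤ 1) (b b' : Fin 2) (c c' : γ) :
    A b c * A b' c' = A b c' * A b' c := by
  by_contra hne
  set B : Matrix (Fin 2) (Fin 2) ℂ := A.submatrix ![b, b'] ![c, c'] with hB
  have hPQ : B = (Matrix.of fun i j => if (![b, b'] : Fin 2 → Fin 2) i = j then (1 : ℂ) else 0)
      * A * (Matrix.of fun (j : γ) (k : Fin 2) =>
        if j = (![c, c'] : Fin 2 → γ) k then (1 : ℂ) else 0) := by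
    ext i k
    simp only [hB, Matrix.submatrix_apply, Matrix.mul_apply, Matrix.of_apply, ite_mul, one_mul,
      zero_mul, mul_ite, mul_one, mul_zero, Finset.sum_ite_eq, Finset.sum_ite_eq',
      Finset.mem_univ, if_true]
  have hdet : B.det ≠ 0 := by
    have : B.det = A b c * A b' c' - A b c' * A b' c := by
      rw [hB, Matrix.det_fin_two]
      simp
    rw [this]
    exact sub_ne_zero_of_ne hne
  have hrank2 : B.rank = 2 := by
    rw [Matrix.rank_of_isUnit B ((Matrix.isUnit_iff_isUnit_det B).2 (isUnit_iff_ne_zero.2 hdet))]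
    simp
  have hle : B.rank ≤ A.rank := by
    rw [hPQ]
    exact le_trans (Matrix.rank_mul_le_left _ _) (Matrix.rank_mul_le_right _ _)
  omega

lemma sig_apply {n : ℕ} (R : (Fin n → Fin 2) → ℂ) (t : Fin n) (b : Fin 2)
    (i : Fin n → Fin 2) :
    sigMatrix R t b (fun s => i s.1) = R (Function.update i t b) := by
  show R _ = _
  congr 1
  funext s
  rw [Function.update_apply]
  by_cases h : s = t <;> simp [h]

lemma key_identity {n : ℕ} (R : (Fin n → Fin 2) → ℂ)
    (hm : ∀ (t : Fin n) (i j : Fin n → Fin 2) (b b' : Fin 2),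
      R (Function.update i t b) * R (Function.update j t b') =
      R (Function.update i t b') * R (Function.update j t b))
    (z i : Fin n → Fin 2) :
    R i * (R z) ^ n = R z * ∏ t, R (Function.update z t (i t)) := by
  have H : ∀ S : Finset (Fin n),
      R i * (R z) ^ S.card =
      R (fun s => if s ∈ S then z s else i s) * ∏ t ∈ S, R (Function.update z t (i t)) := by
    intro S
    induction S using Finset.induction_on with
    | empty => simp
    | @insert a S ha ih =>
      rw [Finset.card_insert_of_notMem ha, Finset.prod_insert ha, pow_succ, ← mul_assoc,
        ih]
      have step : R (fun s => if s ∈ S then z s else i s) * R z =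
          R (fun s => if s ∈ insert a S then z s else i s) *
            R (Function.update z a (i a)) := by
        have h1 : Function.update (fun s => if s ∈ S then z s else i s) a (i a) =
            (fun s => if s ∈ S then z s else i s) := by
          funext s
          rw [Function.update_apply]
          by_cases h : s = a
          · subst h; simp [ha]
          · simp [h]
        have h2 : Function.update (fun s => if s ∈ S then z s else i s) a (z a) =
            (fun s => if s ∈ insert a S then z s else i s) := by
          funext s
          rw [Function.update_apply]
          by_cases h : s = a
          · subst h; simp
          · simp [h, Finset.mem_insert]
        have h3 : Function.update z a (z a) = z := Function.update_eq_self _ _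
        calc R (fun s => if s ∈ S then z s else i s) * R z
            = R (Function.update (fun s => if s ∈ S then z s else i s) a (i a)) *
              R (Function.update z a (z a)) := by rw [h1, h3]
          _ = R (Function.update (fun s => if s ∈ S then z s else i s) a (z a)) *
              R (Function.update z a (i a)) := hm a _ _ _ _
          _ = _ := by rw [h2]
      calc R (fun s => if s ∈ S then z s else i s) *
            (∏ t ∈ S, R (Function.update z t (i t))) * R z
          = (R (fun s => if s ∈ S then z s else i s) * R z) *
            ∏ t ∈ S, R (Function.update z t (i t)) := by ring
        _ = (R (fun s => if s ∈ insert a S then z s else i s) *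
            R (Function.update z a (i a))) *
            ∏ t ∈ S, R (Function.update z t (i t)) := by rw [step]
        _ = _ := by ring
  have := H Finset.univ
  simpa using this

/-- A tensor of arity `n ≥ 1` on domain size 2 is degenerate
iff all of its signature matrices have rank at most 1. -/
theorem degenerate_iff_sigMatrix_rank_le_one {n : ℕ} (hn : 1 ≤ n)
    (R : (Fin n → Fin 2) → ℂ) :
    Degenerate R ↔ ∀ t : Fin n, (sigMatrix R t).rank ≤ 1 := by
  constructor
  · rintro ⟨v, hv⟩ t
    have entry : ∀ (b : Fin 2) (c : {s : Fin n // s ≠ t} → Fin 2),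
        sigMatrix R t b c = v t b * ∏ s : {s : Fin n // s ≠ t}, v s.1 (c s) := by
      intro b c
      show R _ = _
      rw [hv, Fintype.prod_eq_mul_prod_compl t]
      congr 1
      · simp
      · have hsub := Finset.prod_subtype ({t}ᶜ : Finset (Fin n))
          (p := fun s => s ≠ t) (F := inferInstance) (fun x => by simp)
          (fun s => v s (if h : s = t then b else c ⟨s, h⟩))
        rw [hsub]
        apply Finset.prod_congr rfl
        rintro ⟨s, hs⟩ _
        simp [dif_neg hs]
    have hfac : sigMatrix R t =
        Matrix.replicateCol Unit (fun b => v t b) *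
        Matrix.replicateRow Unit (fun c : {s : Fin n // s ≠ t} → Fin 2 =>
          ∏ s : {s : Fin n // s ≠ t}, v s.1 (c s)) := by
      ext b c
      rw [entry, Matrix.mul_apply]
      simp
    rw [hfac]
    refine le_trans (Matrix.rank_mul_le_left _ _) (le_trans (Matrix.rank_le_card_width _) ?_)
    simp
  · intro h
    by_cases hz : ∃ z, R z ≠ 0
    · obtain ⟨z, hz⟩ := hz
      have hm : ∀ (t : Fin n) (i j : Fin n → Fin 2) (b b' : Fin 2),
          R (Function.update i t b) * R (Function.update j t b') =
          R (Function.update i t b') * R (Function.update j t b) := by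
        intro t i j b b'
        have := aux_minor (sigMatrix R t) (h t) b b' (fun s => i s.1) (fun s => j s.1)
        rw [sig_apply, sig_apply, sig_apply, sig_apply] at this
        rw [this]
        ring
      refine ⟨fun t b => (if t = (⟨0, hn⟩ : Fin n) then R z else 1) *
        (R (Function.update z t b) / R z), fun i => ?_⟩
      have hkey := key_identity R hm z i
      have hzn : (R z) ^ n ≠ 0 := pow_ne_zero _ hz
      rw [Finset.prod_mul_distrib]
      have h1 : (∏ t : Fin n, if t = (⟨0, hn⟩ : Fin n) then R z else 1) = R z := by
        rw [Finset.prod_ite_eq' Finset.univ (⟨0, hn⟩ : Fin n) (fun _ => R z)]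
        simp
      have h2 : (∏ t : Fin n, R (Function.update z t (i t)) / R z) =
          (∏ t : Fin n, R (Function.update z t (i t))) / (R z) ^ n := by
        rw [Finset.prod_div_distrib, Finset.prod_const, Finset.card_univ, Fintype.card_fin]
      rw [h1, h2, ← mul_div_assoc, eq_div_iff hzn]
      exact hkey
    · push_neg at hz
      refine ⟨fun _ _ => 0, fun i => ?_⟩
      rw [hz]
      exact (Finset.prod_eq_zero (Finset.mem_univ (⟨0, hn⟩ : Fin n)) rfl).symm
end

section
/- Let k ≥ 3, ℓ ≥ 1, n ≥ 1, and let M be a 2^ℓ × k complex matrix of rank 2 whose columns α_σ and α_τ (for some σ ≠ τ in Fin k) are linearly independent. Suppose R is a tensor of arity n on domain size k such that R = R̲ M^{⊗n} for some tensor R̲ of arity n on domain size 2^ℓ, and R is non-degenerate. Then the matrix A_{σ,τ}(R) has rank 2. -/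
open Matrix BigOperators

/-- Auxiliary induction: a binary tensor satisfying a one-step recurrence is geometric. -/
lemma T_prod_form_aux {n : ℕ} (T : (Fin n → Fin 2) → ℂ) (r : ℂ)
    (hrel : ∀ (t : Fin n) (x : Fin n → Fin 2),
      T (Function.update x t 1) = r * T (Function.update x t 0)) :
    ∀ (m : ℕ) (x : Fin n → Fin 2),
      (Finset.univ.filter fun t => x t = 1).card = m →
      T x = T (fun _ => 0) * r ^ m := by
  classical
  have h2 : ∀ y : Fin 2, y ≠ 1 → y = 0 := by decide
  intro m
  induction m with
  | zero =>
    intro x hx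
    have hx0 : x = fun _ => 0 := by
      funext t
      have ht : t ∉ Finset.univ.filter fun t => x t = 1 := by
        rw [Finset.card_eq_zero] at hx; simp [hx]
      simp only [Finset.mem_filter, Finset.mem_univ, true_and] at ht
      exact h2 _ ht
    rw [hx0]; ring
  | succ m ih =>
    intro x hx
    have hne : (Finset.univ.filter fun t => x t = 1).Nonempty := by
      rw [← Finset.card_pos, hx]; omega
    obtain ⟨t0, ht0⟩ := hne
    simp only [Finset.mem_filter, Finset.mem_univ, true_and] at ht0
    have hcard : (Finset.univ.filter fun t => (Function.update x t0 0) t = 1).card = m := by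
      have he : (Finset.univ.filter fun t => (Function.update x t0 0) t = 1)
          = (Finset.univ.filter fun t => x t = 1).erase t0 := by
        ext s
        simp only [Finset.mem_filter, Finset.mem_univ, true_and, Finset.mem_erase]
        constructor
        · intro hs
          have hst : s ≠ t0 := by
            rintro rfl; rw [Function.update_self] at hs; exact absurd hs (by decide)
          exact ⟨hst, by rwa [Function.update_of_ne hst] at hs⟩
        · rintro ⟨hst, hs⟩; rw [Function.update_of_ne hst]; exact hs
      rw [he, Finset.card_erase_of_mem (by simp [ht0]), hx]; omega
    have hupd : Function.update x t0 1 = x := by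
      rw [← ht0]; exact Function.update_eq_self t0 x
    have h := hrel t0 x
    rw [hupd] at h
    rw [h, ih _ hcard]; ring

/-- If `R` is non-degenerate and realizable on a rank-2 basis
`M` whose columns `σ, τ` are linearly independent, then `A_{σ,τ}(R)` has
rank 2. -/
theorem Amat_rank_two {k ℓ n : ℕ} (hk : 3 ≤ k) (hℓ : 1 ≤ ℓ) (hn : 1 ≤ n)
    (M : Matrix (Fin (2 ^ ℓ)) (Fin k) ℂ) (hM : M.rank = 2) (σ τ : Fin k)
    (hστ : σ ≠ τ)
    (hind : LinearIndependent ℂ ![(fun i => M i σ), (fun i => M i τ)])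
    (R : (Fin n → Fin k) → ℂ) (R0 : (Fin n → Fin (2 ^ ℓ)) → ℂ)
    (hR : R = rtrans M R0) (hnd : ¬ Degenerate R) :
    (Amat R σ τ).rank = 2 := by
  classical
  have h2' : ∀ y : Fin 2, y ≠ 1 → y = 0 := by decide
  set t0 : Fin n := ⟨0, hn⟩ with ht0def
  -- Step 1: every column of M is a combination of columns σ and τ
  have hspan : Submodule.span ℂ (Set.range ![(fun i => M i σ), (fun i => M i τ)])
      = LinearMap.range M.mulVecLin := by
    apply Submodule.eq_of_le_of_finrank_le
    · rw [Submodule.span_le]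
      rintro _ ⟨c, rfl⟩
      fin_cases c
      · exact ⟨Pi.single σ 1, by ext i; simp [Matrix.mulVecLin_apply]⟩
      · exact ⟨Pi.single τ 1, by ext i; simp [Matrix.mulVecLin_apply]⟩
    · have h1 := finrank_span_eq_card hind
      simp only [Fintype.card_fin] at h1
      rw [h1]
      exact le_of_eq hM
  have hNex : ∀ w : Fin k, ∃ c : Fin 2 → ℂ,
      ∀ j, M j w = M j σ * c 0 + M j τ * c 1 := by
    intro w
    have hw : (fun i => M i w) ∈ LinearMap.range M.mulVecLin :=
      ⟨Pi.single w 1, by ext i; simp [Matrix.mulVecLin_apply]⟩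
    rw [← hspan, Submodule.mem_span_range_iff_exists_fun] at hw
    obtain ⟨c, hc⟩ := hw
    refine ⟨c, fun j => ?_⟩
    have h := congrFun hc j
    simp [Fin.sum_univ_two] at h
    linear_combination -h
  choose N hN using hNex
  -- Step 2: R factors through its restriction T = restrict R σ τ
  have hT : ∀ x : Fin n → Fin 2, restrict R σ τ x
      = ∑ j : Fin n → Fin (2 ^ ℓ), R0 j *
          ∏ t, (if x t = 0 then M (j t) σ else M (j t) τ) := by
    intro x
    show R (fun t => if x t = 0 then σ else τ) = _
    rw [hR]
    refine Finset.sum_congr rfl fun j _ => ?_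
    congr 1
    refine Finset.prod_congr rfl fun t _ => ?_
    by_cases h : x t = 0 <;> simp [h]
  have hRT : ∀ i, R i = ∑ x : Fin n → Fin 2, restrict R σ τ x *
      ∏ t, (if x t = 0 then N (i t) 0 else N (i t) 1) := by
    intro i
    conv_lhs => rw [hR]
    show ∑ j : Fin n → Fin (2 ^ ℓ), R0 j * ∏ t, M (j t) (i t) = _
    calc ∑ j : Fin n → Fin (2 ^ ℓ), R0 j * ∏ t, M (j t) (i t)
        = ∑ j : Fin n → Fin (2 ^ ℓ), R0 j * ∑ x : Fin n → Fin 2,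
            ∏ t, ((if x t = 0 then M (j t) σ else M (j t) τ)
              * (if x t = 0 then N (i t) 0 else N (i t) 1)) := by
          refine Finset.sum_congr rfl fun j _ => ?_
          congr 1
          calc ∏ t, M (j t) (i t)
              = ∏ t, ∑ c : Fin 2, ((if c = 0 then M (j t) σ else M (j t) τ)
                  * (if c = 0 then N (i t) 0 else N (i t) 1)) := by
                refine Finset.prod_congr rfl fun t _ => ?_
                rw [Fin.sum_univ_two]
                simpa using hN (i t) (j t)
            _ = _ := by
                rw [Finset.prod_univ_sum, Fintype.piFinset_univ]
      _ = ∑ x : Fin n → Fin 2, ∑ j : Fin n → Fin (2 ^ ℓ),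
            R0 j * ∏ t, ((if x t = 0 then M (j t) σ else M (j t) τ)
              * (if x t = 0 then N (i t) 0 else N (i t) 1)) := by
          simp_rw [Finset.mul_sum]
          exact Finset.sum_comm
      _ = _ := by
          refine Finset.sum_congr rfl fun x _ => ?_
          rw [hT, Finset.sum_mul]
          refine Finset.sum_congr rfl fun j _ => ?_
          rw [Finset.prod_mul_distrib, mul_assoc]
  -- Step 3: injectivity of mulVecLin of Amat
  have hinj : Function.Injective (Amat R σ τ).mulVecLin := by
    rw [← LinearMap.ker_eq_bot, LinearMap.ker_eq_bot']
    intro v hv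
    by_contra hv0
    have hAv : ∀ p, Amat R σ τ p 0 * v 0 + Amat R σ τ p 1 * v 1 = 0 := by
      intro p
      have h := congrFun hv p
      simpa [Matrix.mulVecLin_apply, Matrix.mulVec, dotProduct,
        Fin.sum_univ_two] using h
    set a := v 0 with hadef
    set b := v 1 with hbdef
    have hrel : ∀ (t : Fin n) (x : Fin n → Fin 2),
        a * restrict R σ τ (Function.update x t 0)
          + b * restrict R σ τ (Function.update x t 1) = 0 := by
      intro t x
      have h := hAv ⟨t, fun s => if x s.1 = 0 then σ else τ⟩
      have e0 : Amat R σ τ ⟨t, fun s => if x s.1 = 0 then σ else τ⟩ 0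
          = restrict R σ τ (Function.update x t 0) := by
        show R _ = R _
        congr 1
        funext s
        by_cases hs : s = t
        · subst hs; simp
        · simp [hs, Function.update_of_ne hs]
      have e1 : Amat R σ τ ⟨t, fun s => if x s.1 = 0 then σ else τ⟩ 1
          = restrict R σ τ (Function.update x t 1) := by
        show R _ = R _
        congr 1
        funext s
        by_cases hs : s = t
        · subst hs; simp
        · simp [hs, Function.update_of_ne hs]
      rw [e0, e1] at h
      linear_combination h
    -- Step 4: T is a product tensor
    have hdeg : ∃ vv : Fin n → Fin 2 → ℂ,
        ∀ x, restrict R σ τ x = ∏ t, vv t (x t) := by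
      rcases eq_or_ne b 0 with hb | hb
      · -- b = 0, a ≠ 0
        have ha : a ≠ 0 := by
          intro ha0
          exact hv0 (by funext c; fin_cases c <;> simp [← hadef, ← hbdef, ha0, hb])
        have hzero : ∀ (t : Fin n) (x : Fin n → Fin 2),
            restrict R σ τ (Function.update x t 0) = 0 := by
          intro t x
          have h := hrel t x
          rw [hb, zero_mul, add_zero] at h
          exact (mul_eq_zero.1 h).resolve_left ha
        refine ⟨fun t c => (if t = t0 then restrict R σ τ (fun _ => 1) else 1)
          * (if c = 1 then 1 else 0), fun x => ?_⟩
        by_cases hall : ∀ t, x t = 1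
        · have hx1 : x = fun _ => 1 := funext hall
          subst hx1
          have hfac : ∀ t : Fin n,
              ((if t = t0 then restrict R σ τ (fun _ => 1) else 1)
                * (if ((fun _ => (1 : Fin 2)) t) = 1 then (1:ℂ) else 0))
              = (if t = t0 then restrict R σ τ (fun _ => 1) else 1) := by
            intro t; simp
          rw [Finset.prod_congr rfl (fun t _ => hfac t),
            Finset.prod_ite_eq' Finset.univ t0
              (fun _ => restrict R σ τ (fun _ => (1 : Fin 2)))]
          simp
        · push_neg at hall
          obtain ⟨t, ht⟩ := hall
          have hxt : x t = 0 := h2' _ ht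
          have hx : restrict R σ τ x = 0 := by
            have := hzero t x
            rwa [← hxt, Function.update_eq_self] at this
          rw [hx]
          refine (Finset.prod_eq_zero (Finset.mem_univ t) ?_).symm
          simp [ht]
      · -- b ≠ 0
        set r : ℂ := -(a / b) with hrdef
        have hbr : b * r = -a := by
          rw [hrdef]; field_simp
        have hrec : ∀ (t : Fin n) (x : Fin n → Fin 2),
            restrict R σ τ (Function.update x t 1)
              = r * restrict R σ τ (Function.update x t 0) := by
          intro t x
          have h := hrel t x
          have hmul : b * (restrict R σ τ (Function.update x t 1)
              - r * restrict R σ τ (Function.update x t 0)) = 0 := by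
            linear_combination h - (restrict R σ τ (Function.update x t 0)) * hbr
          exact sub_eq_zero.1 ((mul_eq_zero.1 hmul).resolve_left hb)
        have hform := T_prod_form_aux (restrict R σ τ) r hrec
        refine ⟨fun t c => (if t = t0 then restrict R σ τ (fun _ => 0) else 1)
          * (if c = 0 then 1 else r), fun x => ?_⟩
        rw [hform (Finset.univ.filter fun t => x t = 1).card x rfl]
        rw [Finset.prod_mul_distrib]
        rw [Finset.prod_ite_eq' Finset.univ t0
          (fun _ => restrict R σ τ (fun _ => (0 : Fin 2)))]
        simp only [Finset.mem_univ, if_true]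
        congr 1
        rw [Finset.prod_ite]
        simp only [Finset.prod_const_one, one_mul, Finset.prod_const]
        have hfe : (Finset.univ.filter fun t => ¬ x t = 0)
            = (Finset.univ.filter fun t => x t = 1) := by
          apply Finset.filter_congr
          intro t _
          have : ∀ y : Fin 2, (¬ y = 0) ↔ y = 1 := by decide
          simp [this]
        rw [hfe]
    -- Step 5: R is degenerate, contradiction
    obtain ⟨vv, hvv⟩ := hdeg
    apply hnd
    refine ⟨fun t e => vv t 0 * N e 0 + vv t 1 * N e 1, fun i => ?_⟩
    rw [hRT i]
    calc ∑ x : Fin n → Fin 2, restrict R σ τ x *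
          ∏ t, (if x t = 0 then N (i t) 0 else N (i t) 1)
        = ∑ x : Fin n → Fin 2,
            ∏ t, (vv t (x t) * (if x t = 0 then N (i t) 0 else N (i t) 1)) := by
          refine Finset.sum_congr rfl fun x _ => ?_
          rw [hvv, Finset.prod_mul_distrib]
      _ = ∏ t, ∑ c : Fin 2, (vv t c * (if c = 0 then N (i t) 0 else N (i t) 1)) := by
          rw [Finset.prod_univ_sum, Fintype.piFinset_univ]
      _ = _ := by
          refine Finset.prod_congr rfl fun t _ => ?_
          rw [Fin.sum_univ_two]
          simp
  -- conclude
  show Module.finrank ℂ (LinearMap.range (Amat R σ τ).mulVecLin) = 2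
  rw [LinearMap.finrank_range_of_inj hinj]
  simp [Module.finrank_fintype_fun_eq_card]
end

section
/- Let k ≥ 3, ℓ ≥ 1, n ≥ 1, and let M = (α_1 ⋯ α_k) be a 2^ℓ × k complex matrix of rank 2 whose columns α_σ, α_τ (σ ≠ τ) are linearly independent, and let X_{σ,τ} be the unique 2 × k matrix with (α_σ α_τ)·X_{σ,τ} = M, with entries X_{σ,τ} = (x^σ_w; x^τ_w)_{w ∈ Fin k}. Suppose R is a tensor of arity n on domain size k with R = R̲ M^{⊗n} for some tensor R̲ of arity n on domain size 2^ℓ. Then for every w ∈ Fin k, every position t ∈ Fin n, and all values i_1,…,i_{t-1},i_{t+1},…,i_n ∈ Fin k: R(i_1,…,i_{t-1}, w, i_{t+1},…,i_n) = x^σ_w · R(i_1,…,i_{t-1}, σ, i_{t+1},…,i_n) + x^τ_w · R(i_1,…,i_{t-1}, τ, i_{t+1},…,i_n). -/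
open Matrix BigOperators

/-- If `R = R̲ M^{⊗n}` and `(α_σ α_τ) · X_{σ,τ} = M`, then the
value of `R` at any index with position `t` set to `w` is the corresponding
linear combination of the values with position `t` set to `σ` resp. `τ`. -/
theorem entry_linear_combination {k ℓ n : ℕ} (hk : 3 ≤ k) (hℓ : 1 ≤ ℓ)
    (hn : 1 ≤ n) (M : Matrix (Fin (2 ^ ℓ)) (Fin k) ℂ) (hM : M.rank = 2)
    (σ τ : Fin k) (hστ : σ ≠ τ)
    (hind : LinearIndependent ℂ ![(fun i => M i σ), (fun i => M i τ)])
    (X : Matrix (Fin 2) (Fin k) ℂ) (hX : subM M σ τ * X = M)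
    (R : (Fin n → Fin k) → ℂ) (R0 : (Fin n → Fin (2 ^ ℓ)) → ℂ)
    (hR : R = rtrans M R0) :
    ∀ (w : Fin k) (t : Fin n) (i : Fin n → Fin k),
      R (Function.update i t w) =
        X 0 w * R (Function.update i t σ) + X 1 w * R (Function.update i t τ) := by
  subst hR
  intro w t i
  have key : ∀ w' : Fin k, rtrans M R0 (Function.update i t w') =
      ∑ j : Fin n → Fin (2 ^ ℓ),
        R0 j * (M (j t) w' * ∏ s ∈ Finset.univ.erase t, M (j s) (i s)) := by
    intro w'
    unfold rtrans
    refine Finset.sum_congr rfl fun j _ => ?_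
    congr 1
    rw [← Finset.mul_prod_erase _ _ (Finset.mem_univ t)]
    congr 1
    · simp
    · refine Finset.prod_congr rfl fun s hs => ?_
      rw [Function.update_of_ne (Finset.ne_of_mem_erase hs)]
  have hMe : ∀ a : Fin (2 ^ ℓ), M a w = M a σ * X 0 w + M a τ * X 1 w := by
    intro a
    have := congrFun (congrFun hX a) w
    rw [Matrix.mul_apply, Fin.sum_univ_two] at this
    simpa [subM, mul_comm] using this.symm
  rw [key, key, key, Finset.mul_sum, Finset.mul_sum, ← Finset.sum_add_distrib]
  refine Finset.sum_congr rfl fun j _ => ?_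
  rw [hMe]
  ring
end

section
/- Let k ≥ 3, ℓ ≥ 1, n ≥ 1, and let M = (α_1 ⋯ α_k) be a 2^ℓ × k complex matrix of rank 2 whose columns α_σ, α_τ (σ ≠ τ) are linearly independent, and let X_{σ,τ} = (x^σ_w; x^τ_w)_{w ∈ Fin k} be the unique 2 × k matrix with (α_σ α_τ)·X_{σ,τ} = M. Suppose R is a non-degenerate tensor of arity n on domain size k with R = R̲ M^{⊗n} for some tensor R̲ of arity n on domain size 2^ℓ. Then for every w ∈ Fin k, the linear system A_{σ,τ}(R) · X = b_w(R) has the unique solution X = (x^σ_w, x^τ_w)ᵀ; that is, (x^σ_w, x^τ_w)ᵀ satisfies the system, and it is the only vector in ℂ² that does. -/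
open Matrix BigOperators

section Aux

/-- One-coordinate exchange step. -/
lemma step_lemma {n : ℕ} (f : (Fin n → Fin 2) → ℂ) (v : Fin 2 → ℂ)
    (hrel : ∀ (t : Fin n) (c : Fin n → Fin 2),
      v 1 * f (Function.update c t 0) = v 0 * f (Function.update c t 1)) :
    ∀ (c : Fin n → Fin 2) (t : Fin n) (x : Fin 2),
      f c * v x = f (Function.update c t x) * v (c t) := by
  intro c t x
  have h2 : ∀ z : Fin 2, z = 0 ∨ z = 1 := by decide
  have hupd : ∀ z : Fin 2, c t = z → Function.update c t z = c := by
    intro z hz; rw [← hz]; exact Function.update_eq_self t c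
  rcases h2 (c t) with h | h <;> rcases h2 x with hx | hx <;> subst hx
  · rw [hupd 0 h, h]
  · have h1 := hrel t c
    rw [hupd 0 h] at h1
    rw [h]; linear_combination h1
  · have h1 := hrel t c
    rw [hupd 1 h] at h1
    rw [h]; linear_combination -h1
  · rw [hupd 1 h, h]

/-- Exchange lemma by induction on a finite set of coordinates. -/
lemma exchange {n : ℕ} (f : (Fin n → Fin 2) → ℂ) (v : Fin 2 → ℂ)
    (hrel : ∀ (t : Fin n) (c : Fin n → Fin 2),
      v 1 * f (Function.update c t 0) = v 0 * f (Function.update c t 1)) :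
    ∀ (s : Finset (Fin n)) (c d : Fin n → Fin 2), (∀ t ∉ s, c t = d t) →
      f c * ∏ t ∈ s, v (d t) = f d * ∏ t ∈ s, v (c t) := by
  intro s
  induction s using Finset.induction_on with
  | empty =>
    intro c d h
    have : c = d := funext fun t => h t (by simp)
    rw [this]
  | @insert t s ht ih =>
    intro c d hcd
    have hc' : ∀ u ∉ s, Function.update c t (d t) u = d u := by
      intro u hu
      by_cases hut : u = t
      · subst hut; simp
      · rw [Function.update_of_ne hut]
        exact hcd u (by simp [Finset.mem_insert, hut, hu])
    have hstep := step_lemma f v hrel c t (d t)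
    have hih := ih (Function.update c t (d t)) d hc'
    have hprod : (∏ u ∈ s, v (Function.update c t (d t) u)) = ∏ u ∈ s, v (c u) :=
      Finset.prod_congr rfl fun u hu => by
        rw [Function.update_of_ne (by rintro rfl; exact ht hu)]
    rw [Finset.prod_insert ht, Finset.prod_insert ht]
    linear_combination (∏ u ∈ s, v (d u)) * hstep + v (c t) * hih +
      (f d * v (c t)) * hprod

/-- Product form of a tensor satisfying the exchange relations. -/
lemma prod_form {n : ℕ} (f : (Fin n → Fin 2) → ℂ) (v : Fin 2 → ℂ)
    (hrel : ∀ (t : Fin n) (c : Fin n → Fin 2),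
      v 1 * f (Function.update c t 0) = v 0 * f (Function.update c t 1))
    (d0 : Fin 2) (hv : v d0 ≠ 0) :
    ∃ C : ℂ, ∀ c, f c = C * ∏ t, v (c t) := by
  refine ⟨f (fun _ => d0) / v d0 ^ n, fun c => ?_⟩
  have h := exchange f v hrel Finset.univ c (fun _ => d0)
    (fun t ht => absurd (Finset.mem_univ t) ht)
  rw [Finset.prod_const, Finset.card_univ, Fintype.card_fin] at h
  have hpow : v d0 ^ n ≠ 0 := pow_ne_zero n hv
  field_simp
  linear_combination h

/-- Decomposition of a transformed tensor through its restriction. -/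
lemma decomp {ℓ n k : ℕ} (M : Matrix (Fin (2 ^ ℓ)) (Fin k) ℂ) (σ τ : Fin k)
    (X : Matrix (Fin 2) (Fin k) ℂ) (hX : subM M σ τ * X = M)
    (R0 : (Fin n → Fin (2 ^ ℓ)) → ℂ) (i : Fin n → Fin k) :
    rtrans M R0 i =
      ∑ c : Fin n → Fin 2, restrict (rtrans M R0) σ τ c * ∏ t, X (c t) (i t) := by
  have hM : ∀ (a : Fin (2 ^ ℓ)) (w : Fin k),
      M a w = ∑ z : Fin 2, subM M σ τ a z * X z w := by
    intro a w
    have h : (subM M σ τ * X) a w = M a w := by rw [hX]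
    rw [Matrix.mul_apply] at h
    exact h.symm
  have hsub : ∀ (a : Fin (2 ^ ℓ)) (z : Fin 2),
      M a (if z = 0 then σ else τ) = subM M σ τ a z := by
    intro a z
    by_cases h : z = 0 <;> simp [subM, h]
  calc rtrans M R0 i
      = ∑ j : Fin n → Fin (2 ^ ℓ), R0 j *
          ∏ t, ∑ z : Fin 2, subM M σ τ (j t) z * X z (i t) := by
        unfold rtrans
        exact Finset.sum_congr rfl fun j _ => by
          rw [Finset.prod_congr rfl fun t _ => hM (j t) (i t)]
    _ = ∑ j : Fin n → Fin (2 ^ ℓ), ∑ c : Fin n → Fin 2,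
          R0 j * ((∏ t, subM M σ τ (j t) (c t)) * ∏ t, X (c t) (i t)) := by
        apply Finset.sum_congr rfl
        intro j _
        rw [Finset.prod_univ_sum, Fintype.piFinset_univ, Finset.mul_sum]
        exact Finset.sum_congr rfl fun c _ => by rw [Finset.prod_mul_distrib]
    _ = ∑ c : Fin n → Fin 2,
          (∑ j : Fin n → Fin (2 ^ ℓ), R0 j * ∏ t, subM M σ τ (j t) (c t)) *
            ∏ t, X (c t) (i t) := by
        rw [Finset.sum_comm]
        apply Finset.sum_congr rfl
        intro c _
        rw [Finset.sum_mul]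
        exact Finset.sum_congr rfl fun j _ => by ring
    _ = ∑ c : Fin n → Fin 2, restrict (rtrans M R0) σ τ c * ∏ t, X (c t) (i t) := by
        apply Finset.sum_congr rfl
        intro c _
        congr 1
        unfold restrict rtrans
        exact (Finset.sum_congr rfl fun j _ => by
          rw [Finset.prod_congr rfl fun t _ => hsub (j t) (c t)]).symm

/-- Row linearity of a transformed tensor. -/
lemma row_lin {ℓ n k : ℕ} (M : Matrix (Fin (2 ^ ℓ)) (Fin k) ℂ) (σ τ : Fin k)
    (X : Matrix (Fin 2) (Fin k) ℂ) (hX : subM M σ τ * X = M)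
    (R0 : (Fin n → Fin (2 ^ ℓ)) → ℂ) (w : Fin k) (t : Fin n)
    (p : {s : Fin n // s ≠ t} → Fin k) :
    rtrans M R0 (fun s => if h : s = t then w else p ⟨s, h⟩) =
      X 0 w * rtrans M R0 (fun s => if h : s = t then σ else p ⟨s, h⟩) +
      X 1 w * rtrans M R0 (fun s => if h : s = t then τ else p ⟨s, h⟩) := by
  have hM : ∀ a, M a w = M a σ * X 0 w + M a τ * X 1 w := by
    intro a
    have h : (subM M σ τ * X) a w = M a w := by rw [hX]
    rw [Matrix.mul_apply, Fin.sum_univ_two] at h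
    simp only [subM, Matrix.of_apply] at h
    simpa using h.symm
  unfold rtrans
  rw [Finset.mul_sum, Finset.mul_sum, ← Finset.sum_add_distrib]
  apply Finset.sum_congr rfl
  intro j _
  have key : ∀ a : Fin k,
      (∏ s, M (j s) (if h : s = t then a else p ⟨s, h⟩)) =
        M (j t) a *
          ∏ s ∈ Finset.univ.erase t, M (j s) (if h : s = t then σ else p ⟨s, h⟩) := by
    intro a
    rw [← Finset.mul_prod_erase Finset.univ _ (Finset.mem_univ t)]
    congr 1
    · simp
    · apply Finset.prod_congr rfl
      intro s hs
      have hst : s ≠ t := Finset.ne_of_mem_erase hs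
      rw [dif_neg hst, dif_neg hst]
  rw [key w, key σ, key τ, hM (j t)]
  ring

end Aux

/-- If `R` is non-degenerate and `R = R̲ M^{⊗n}`, then for
every `w` the linear system `A_{σ,τ}(R) · X = b_w(R)` has the unique solution
`(x^σ_w, x^τ_w)ᵀ`. -/
theorem unique_solution {k ℓ n : ℕ} (hk : 3 ≤ k) (hℓ : 1 ≤ ℓ) (hn : 1 ≤ n)
    (M : Matrix (Fin (2 ^ ℓ)) (Fin k) ℂ) (hM : M.rank = 2) (σ τ : Fin k)
    (hστ : σ ≠ τ)
    (hind : LinearIndependent ℂ ![(fun i => M i σ), (fun i => M i τ)])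
    (X : Matrix (Fin 2) (Fin k) ℂ) (hX : subM M σ τ * X = M)
    (R : (Fin n → Fin k) → ℂ) (R0 : (Fin n → Fin (2 ^ ℓ)) → ℂ)
    (hR : R = rtrans M R0) (hnd : ¬ Degenerate R) :
    ∀ w : Fin k,
      (Amat R σ τ).mulVec ![X 0 w, X 1 w] = bvec R w ∧
      ∀ y : Fin 2 → ℂ, (Amat R σ τ).mulVec y = bvec R w → y = ![X 0 w, X 1 w] := by
  have hdec : ∀ i, R i = ∑ c : Fin n → Fin 2, restrict R σ τ c * ∏ t, X (c t) (i t) := by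
    intro i; rw [hR]; exact decomp M σ τ X hX R0 i
  have hrow : ∀ (w : Fin k) (t : Fin n) (p : {s : Fin n // s ≠ t} → Fin k),
      R (fun s => if h : s = t then w else p ⟨s, h⟩) =
        X 0 w * R (fun s => if h : s = t then σ else p ⟨s, h⟩) +
        X 1 w * R (fun s => if h : s = t then τ else p ⟨s, h⟩) := by
    intro w t p; rw [hR]; exact row_lin M σ τ X hX R0 w t p
  intro w
  have hsol : (Amat R σ τ).mulVec ![X 0 w, X 1 w] = bvec R w := by
    funext p
    obtain ⟨t, q⟩ := p
    simp only [Matrix.mulVec, dotProduct, Fin.sum_univ_two, Amat, bvec, Matrix.of_apply,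
      Matrix.cons_val_zero, Matrix.cons_val_one, Matrix.head_cons]
    rw [hrow w t q]
    norm_num
    ring
  refine ⟨hsol, ?_⟩
  intro y hy
  by_cases h0 : y 0 = X 0 w ∧ y 1 = X 1 w
  · funext c; fin_cases c <;> simp [h0.1, h0.2]
  · exfalso
    apply hnd
    set a := y 0 - X 0 w with ha
    set b := y 1 - X 1 w with hb
    have hab : ∀ (t : Fin n) (p : {s : Fin n // s ≠ t} → Fin k),
        a * R (fun s => if h : s = t then σ else p ⟨s, h⟩) +
        b * R (fun s => if h : s = t then τ else p ⟨s, h⟩) = 0 := by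
      intro t p
      have h1 := congrFun hy ⟨t, p⟩
      simp only [Matrix.mulVec, dotProduct, Fin.sum_univ_two, Amat, bvec,
        Matrix.of_apply] at h1
      norm_num at h1
      have h1' : (R fun s => if h : s = t then σ else p ⟨s, h⟩) * y 0 +
          (R fun s => if h : s = t then τ else p ⟨s, h⟩) * y 1 =
          R fun s => if h : s = t then w else p ⟨s, h⟩ := h1
      have h2 := hrow w t p
      rw [ha, hb]; linear_combination h1' + h2
    set v : Fin 2 → ℂ := ![b, -a] with hv
    have hrel : ∀ (t : Fin n) (c : Fin n → Fin 2),
        v 1 * restrict R σ τ (Function.update c t 0) =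
        v 0 * restrict R σ τ (Function.update c t 1) := by
      intro t c
      set p : {s : Fin n // s ≠ t} → Fin k :=
        fun s => if c s.1 = 0 then σ else τ with hp
      have hpt : ∀ (z : Fin 2),
          restrict R σ τ (Function.update c t z) =
          R (fun s => if h : s = t then (if z = 0 then σ else τ) else p ⟨s, h⟩) := by
        intro z
        unfold restrict
        congr 1
        funext s
        by_cases hst : s = t
        · subst hst; rw [dif_pos rfl, Function.update_self]
        · rw [dif_neg hst, Function.update_of_ne hst, hp]
      have h3 := hab t p
      rw [hpt 0, hpt 1]
      norm_num
      simp only [hv, Matrix.cons_val_zero, Matrix.cons_val_one, Matrix.head_cons]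
      linear_combination -h3
    have hvne : ∃ d0 : Fin 2, v d0 ≠ 0 := by
      rcases not_and_or.mp h0 with h | h
      · exact ⟨1, by simp [hv]; exact sub_ne_zero.mpr h⟩
      · exact ⟨0, by simp [hv]; exact sub_ne_zero.mpr h⟩
    obtain ⟨d0, hd0⟩ := hvne
    obtain ⟨C, hC⟩ := prod_form (restrict R σ τ) v hrel d0 hd0
    refine ⟨fun t z => (if t = (⟨0, hn⟩ : Fin n) then C else 1) * ∑ x : Fin 2, v x * X x z, ?_⟩
    intro i
    rw [hdec i]
    rw [Finset.prod_mul_distrib]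
    have h1 : (∏ t : Fin n, if t = (⟨0, hn⟩ : Fin n) then C else 1) = C := by
      rw [Finset.prod_ite_eq']
      simp
    rw [h1, Finset.prod_univ_sum, Fintype.piFinset_univ, Finset.mul_sum]
    apply Finset.sum_congr rfl
    intro c _
    rw [hC c, Finset.prod_mul_distrib]
    ring
end

section
/- Let k ≥ 3, ℓ ≥ 1, n ≥ 1. Let M = (α_1 ⋯ α_k) be a 2^ℓ × k complex matrix whose columns α_σ, α_τ (σ ≠ τ) are linearly independent, let X_{σ,τ} be a 2 × k matrix with (α_σ α_τ)·X_{σ,τ} = M, and let X'_{σ,τ} be an invertible k × k matrix with X_{σ,τ}·X'_{σ,τ} = [[1,0,0,…,0],[0,1,0,…,0]]. Suppose R = R̲ M^{⊗n} for a tensor R̲ of arity n on domain size 2^ℓ, and set R' = R (X'_{σ,τ})^{⊗n}. Then R' = R̲ N^{⊗n} where N is the 2^ℓ × k matrix whose first column is α_σ, second column is α_τ, and all remaining columns are zero; in particular, the restriction of R' to {0,1} (the first two domain values) equals R^{(σ,τ)}. -/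
open Matrix BigOperators

lemma rtrans_comp {n : ℕ} {D E F : Type*} [Fintype D] [Fintype E]
    (A : Matrix D E ℂ) (B : Matrix E F ℂ) (R : (Fin n → D) → ℂ) :
    rtrans B (rtrans A R) = rtrans (A * B) R := by
  funext i
  simp only [rtrans, Matrix.mul_apply]
  simp_rw [Finset.sum_mul, mul_assoc, ← Finset.prod_mul_distrib]
  rw [Finset.sum_comm]
  congr 1; funext s
  rw [← Finset.mul_sum]
  congr 1
  rw [← Fintype.piFinset_univ]
  exact (Finset.prod_univ_sum (fun _ => Finset.univ) (fun t j => A (s t) j * B j (i t))).symm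

/-- With `R' = R (X'_{σ,τ})^{⊗n}`, we have
`R' = R̲ (α_σ α_τ 0 ⋯ 0)^{⊗n}`; in particular the restriction of `R'` to the
first two domain values equals `R^{(σ,τ)}`. -/
theorem transformed_recognizer {k ℓ n : ℕ} (hk : 3 ≤ k) (hℓ : 1 ≤ ℓ)
    (hn : 1 ≤ n) (M : Matrix (Fin (2 ^ ℓ)) (Fin k) ℂ) (σ τ : Fin k)
    (hστ : σ ≠ τ)
    (hind : LinearIndependent ℂ ![(fun i => M i σ), (fun i => M i τ)])
    (X : Matrix (Fin 2) (Fin k) ℂ) (hX : subM M σ τ * X = M)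
    (X' : Matrix (Fin k) (Fin k) ℂ) (hinv : IsUnit X'.det)
    (hXX' : X * X' = projMat k)
    (R : (Fin n → Fin k) → ℂ) (R0 : (Fin n → Fin (2 ^ ℓ)) → ℂ)
    (hR : R = rtrans M R0) (R' : (Fin n → Fin k) → ℂ)
    (hR' : R' = rtrans X' R) :
    R' = rtrans (Matrix.of fun i c =>
        if c = (⟨0, by omega⟩ : Fin k) then M i σ
        else if c = (⟨1, by omega⟩ : Fin k) then M i τ else 0) R0 ∧
    restrict R' ⟨0, by omega⟩ ⟨1, by omega⟩ = restrict R σ τ := by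
  have key : R' = rtrans (M * X') R0 := by
    rw [hR', hR, rtrans_comp]
  have hMX' : M * X' = (Matrix.of fun i c =>
      if c = (⟨0, by omega⟩ : Fin k) then M i σ
      else if c = (⟨1, by omega⟩ : Fin k) then M i τ else 0) := by
    have h2 : M * X' = subM M σ τ * projMat k := by
      rw [← hXX', ← Matrix.mul_assoc, hX]
    rw [h2]
    ext i c
    simp only [Matrix.mul_apply, subM, projMat, Matrix.of_apply, Fin.sum_univ_two]
    by_cases h0 : c = (⟨0, by omega⟩ : Fin k)
    · subst h0; norm_num
    · by_cases h1 : c = (⟨1, by omega⟩ : Fin k)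
      · subst h1; norm_num
      · have e0 : (0:ℕ) ≠ (c : ℕ) := fun h => h0 (Fin.ext h.symm)
        have e1 : (1:ℕ) ≠ (c : ℕ) := fun h => h1 (Fin.ext h.symm)
        simp [Fin.val_zero, Fin.val_one, e0, e1, h0, h1]
  constructor
  · rw [key, hMX']
  · funext j
    simp only [restrict, key, hMX', hR, rtrans]
    congr 1; funext s
    congr 1
    apply Finset.prod_congr rfl
    intro t _
    by_cases h : j t = 0 <;> simp [h]
end

section
/- Let k ≥ 3, ℓ ≥ 1, n ≥ 1. Let M be a 2^ℓ × k complex matrix whose columns α_σ, α_τ (σ ≠ τ) are linearly independent, let X_{σ,τ} be a 2 × k matrix with (α_σ α_τ)·X_{σ,τ} = M, and let X'_{σ,τ} be an invertible k × k matrix with X_{σ,τ}·X'_{σ,τ} = [[1,0,0,…,0],[0,1,0,…,0]]. Suppose R = R̲ M^{⊗n} for a tensor R̲ of arity n on domain size 2^ℓ, and set R' = R (X'_{σ,τ})^{⊗n}. Then R'(i_1,…,i_n) = 0 whenever some index i_j lies outside the first two domain values {0,1}. -/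
open Matrix BigOperators

/-- With `R' = R (X'_{σ,τ})^{⊗n}`, the tensor `R'` vanishes
at any index having a coordinate outside the first two domain values. -/
theorem transformed_recognizer_vanishes {k ℓ n : ℕ} (hk : 3 ≤ k) (hℓ : 1 ≤ ℓ)
    (hn : 1 ≤ n) (M : Matrix (Fin (2 ^ ℓ)) (Fin k) ℂ) (σ τ : Fin k)
    (hστ : σ ≠ τ)
    (hind : LinearIndependent ℂ ![(fun i => M i σ), (fun i => M i τ)])
    (X : Matrix (Fin 2) (Fin k) ℂ) (hX : subM M σ τ * X = M)
    (X' : Matrix (Fin k) (Fin k) ℂ) (hinv : IsUnit X'.det)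
    (hXX' : X * X' = projMat k)
    (R : (Fin n → Fin k) → ℂ) (R0 : (Fin n → Fin (2 ^ ℓ)) → ℂ)
    (hR : R = rtrans M R0) (R' : (Fin n → Fin k) → ℂ)
    (hR' : R' = rtrans X' R) :
    ∀ i : Fin n → Fin k, (∃ j : Fin n, 2 ≤ (i j : ℕ)) → R' i = 0 := by
  intro i ⟨j0, hj0⟩
  have hN : R' = rtrans (subM M σ τ * projMat k) R0 := by
    rw [hR', hR, rtrans_comp, ← hXX', ← Matrix.mul_assoc, hX]
  rw [hN]
  simp only [rtrans]
  refine Finset.sum_eq_zero fun s _ => ?_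
  have hzero : (subM M σ τ * projMat k) (s j0) (i j0) = 0 := by
    rw [Matrix.mul_apply]
    refine Finset.sum_eq_zero fun r _ => ?_
    have : (projMat k) r (i j0) = 0 := by
      have hr : (r : ℕ) < 2 := r.2
      simp only [projMat, Matrix.of_apply]
      rw [if_neg (by omega)]
    rw [this, mul_zero]
  rw [Finset.prod_eq_zero (Finset.mem_univ j0) hzero, mul_zero]
end

section
/- Let k ≥ 3, ℓ ≥ 1. Let M = (α_1 ⋯ α_k) be a 2^ℓ × k complex matrix of rank 2 whose columns α_σ, α_τ (σ ≠ τ) are linearly independent, let X_{σ,τ} be the unique 2 × k matrix with (α_σ α_τ)·X_{σ,τ} = M, and let X'_{σ,τ} be an invertible k × k matrix with X_{σ,τ}·X'_{σ,τ} = [[1,0,0,…,0],[0,1,0,…,0]]. Let R_1,…,R_r be tensors of arity n on domain size k and G_1,…,G_g column tensors of arity n on domain size k, and suppose there are tensors R̲_i, G̲_j of arity n on domain size 2^ℓ with R_i = R̲_i M^{⊗n} for all i and M^{⊗n} G_j = G̲_j for all j. Define Ř_i as the restriction of R_i (X'_{σ,τ})^{⊗n} to {0,1}, and Ǧ_j as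 the restriction of (X'^{-1}_{σ,τ})^{⊗n} G_j to {0,1}. Then, with M_{(2)} = (α_σ α_τ) a 2^ℓ × 2 matrix of rank 2, it holds that Ř_i = R̲_i M_{(2)}^{⊗n} for all 1 ≤ i ≤ r and M_{(2)}^{⊗n} Ǧ_j = G̲_j for all 1 ≤ j ≤ g. -/
open Matrix BigOperators

lemma gtrans_comp {n : ℕ} {D E F : Type*} [Fintype E] [Fintype F]
    (A : Matrix D E ℂ) (B : Matrix E F ℂ) (G : (Fin n → F) → ℂ) :
    gtrans A (gtrans B G) = gtrans (A * B) G := by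
  funext s
  simp only [gtrans, Finset.mul_sum, Matrix.mul_apply]
  rw [Finset.sum_comm]
  refine Finset.sum_congr rfl fun m _ => ?_
  have : ∀ i : Fin n → E, (∏ t, A (s t) (i t)) * ((∏ t, B (i t) (m t)) * G m)
      = (∏ t, (A (s t) (i t) * B (i t) (m t))) * G m := by
    intro i; rw [← mul_assoc, ← Finset.prod_mul_distrib]
  simp only [this]
  rw [← Finset.sum_mul]
  congr 1
  rw [Finset.prod_univ_sum]
  simp [Fintype.piFinset_univ]

-- key entrywise identity: (N * projMat k) d c = if c = 0 then N d 0, c = 1 then N d 1, else 0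
lemma mul_projMat_apply {D : Type*} {k : ℕ} (hk : 3 ≤ k) (N : Matrix D (Fin 2) ℂ)
    (d : D) (c : Fin k) :
    (N * projMat k) d c =
      if (c : ℕ) = 0 then N d 0 else if (c : ℕ) = 1 then N d 1 else 0 := by
  simp only [Matrix.mul_apply, Fin.sum_univ_two, projMat, Matrix.of_apply]
  by_cases h0 : (c : ℕ) = 0
  · simp [h0]
  · by_cases h1 : (c : ℕ) = 1
    · simp [h0, h1]
    · have e0 : ¬(0 = (c : ℕ)) := fun h => h0 h.symm
      have e1 : ¬(1 = (c : ℕ)) := fun h => h1 h.symm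
      simp [e0, e1, h0, h1]

lemma gtrans_restrict {n k : ℕ} {D : Type*} (hk : 3 ≤ k)
    (N : Matrix D (Fin 2) ℂ) (H : (Fin n → Fin k) → ℂ) :
    gtrans N (restrict H ⟨0, by omega⟩ ⟨1, by omega⟩) = gtrans (N * projMat k) H := by
  funext s
  simp only [gtrans, restrict]
  set φ : (Fin n → Fin 2) → (Fin n → Fin k) :=
    fun j t => if j t = 0 then ⟨0, by omega⟩ else ⟨1, by omega⟩ with hφ
  have hinj : ∀ x ∈ (Finset.univ : Finset (Fin n → Fin 2)), ∀ y ∈ Finset.univ,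
      φ x = φ y → x = y := by
    intro x _ y _ hxy
    funext t
    have := congrFun hxy t
    simp only [hφ] at this
    by_cases hx : x t = 0 <;> by_cases hy : y t = 0 <;>
      simp [hx, hy, Fin.ext_iff] at this ⊢ <;> omega
  have himg : ∀ i : Fin n → Fin k, i ∉ Finset.univ.image φ →
      (∏ t, (N * projMat k) (s t) (i t)) * H i = 0 := by
    intro i hi
    have : ∃ t, 2 ≤ (i t : ℕ) := by
      by_contra h
      push_neg at h
      apply hi
      rw [Finset.mem_image]
      refine ⟨fun t => if (i t : ℕ) = 0 then 0 else 1, Finset.mem_univ _, ?_⟩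
      funext t
      have := h t
      simp only [hφ]
      by_cases h0 : (i t : ℕ) = 0 <;> simp [h0, Fin.ext_iff] <;> omega
    obtain ⟨t, ht⟩ := this
    have : (N * projMat k) (s t) (i t) = 0 := by
      rw [mul_projMat_apply hk]
      have h0 : ¬((i t : ℕ) = 0) := by omega
      have h1 : ¬((i t : ℕ) = 1) := by omega
      simp [h0, h1]
    rw [Finset.prod_eq_zero (Finset.mem_univ t) this, zero_mul]
  rw [← Finset.sum_subset (Finset.subset_univ (Finset.univ.image φ))
      (fun i _ hi => himg i hi), Finset.sum_image hinj]
  refine Finset.sum_congr rfl fun j _ => ?_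
  congr 1
  refine Finset.prod_congr rfl fun t _ => ?_
  rw [mul_projMat_apply hk]
  simp only [hφ]
  by_cases h : j t = 0
  · simp [h]
  · have : j t = 1 := by omega
    simp [this]

lemma subM_rank_two {D : Type*} [Fintype D] {k : ℕ} (M : Matrix D (Fin k) ℂ)
    (σ τ : Fin k)
    (hind : LinearIndependent ℂ ![(fun i => M i σ), (fun i => M i τ)]) :
    (subM M σ τ).rank = 2 := by
  have hinj : Function.Injective (subM M σ τ).mulVecLin := by
    rw [← LinearMap.ker_eq_bot, LinearMap.ker_eq_bot']
    intro v hv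
    have hv' : (subM M σ τ).mulVec v = 0 := hv
    have hsum : ∑ c : Fin 2, v c • ![(fun i => M i σ), (fun i => M i τ)] c = 0 := by
      funext d
      have := congrFun hv' d
      simp only [Matrix.mulVec, dotProduct, Fin.sum_univ_two, subM,
        Matrix.of_apply] at this
      simp only [Fin.sum_univ_two, Matrix.cons_val_zero, Matrix.cons_val_one,
        Matrix.head_cons, Pi.add_apply, Pi.smul_apply, smul_eq_mul, Pi.zero_apply]
      simp at this
      linear_combination this
    have hli := Fintype.linearIndependent_iff.mp hind v hsum
    funext c
    fin_cases c
    · exact hli 0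
    · exact hli 1
  rw [Matrix.rank, LinearMap.finrank_range_of_inj hinj]
  simp


/-- If the `R_i` and `G_j` are simultaneously realizable on a
rank-2 basis `M` with linearly independent columns `σ, τ`, then the checked
signatures `Ř_i` and `Ǧ_j` are simultaneously realizable on
`M_{(2)} = (α_σ α_τ)`, which has rank 2. -/
theorem checked_signatures_realizable {k ℓ n r g : ℕ} (hk : 3 ≤ k)
    (hℓ : 1 ≤ ℓ) (M : Matrix (Fin (2 ^ ℓ)) (Fin k) ℂ) (hM : M.rank = 2)
    (σ τ : Fin k) (hστ : σ ≠ τ)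
    (hind : LinearIndependent ℂ ![(fun i => M i σ), (fun i => M i τ)])
    (X : Matrix (Fin 2) (Fin k) ℂ) (hX : subM M σ τ * X = M)
    (X' : Matrix (Fin k) (Fin k) ℂ) (hinv : IsUnit X'.det)
    (hXX' : X * X' = projMat k)
    (R : Fin r → (Fin n → Fin k) → ℂ) (G : Fin g → (Fin n → Fin k) → ℂ)
    (R0 : Fin r → (Fin n → Fin (2 ^ ℓ)) → ℂ)
    (G0 : Fin g → (Fin n → Fin (2 ^ ℓ)) → ℂ)
    (hR : ∀ i, R i = rtrans M (R0 i)) (hG : ∀ j, gtrans M (G j) = G0 j) :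
    (subM M σ τ).rank = 2 ∧
    (∀ i, restrict (rtrans X' (R i)) ⟨0, by omega⟩ ⟨1, by omega⟩ =
        rtrans (subM M σ τ) (R0 i)) ∧
    (∀ j, gtrans (subM M σ τ)
        (restrict (gtrans X'⁻¹ (G j)) ⟨0, by omega⟩ ⟨1, by omega⟩) = G0 j) := by
  have hMX' : M * X' = subM M σ τ * projMat k := by
    conv_lhs => rw [← hX]
    rw [Matrix.mul_assoc, hXX']
  refine ⟨subM_rank_two M σ τ hind, ?_, ?_⟩
  · intro i
    funext j
    rw [hR i, rtrans_comp, hMX']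
    simp only [restrict, rtrans]
    refine Finset.sum_congr rfl fun m _ => ?_
    congr 1
    refine Finset.prod_congr rfl fun t _ => ?_
    rw [mul_projMat_apply hk]
    by_cases h : j t = 0
    · simp [h]
    · have h1 : j t = 1 := by omega
      simp [h, h1]
  · intro j
    rw [gtrans_restrict hk, gtrans_comp, ← hMX', Matrix.mul_assoc,
      Matrix.mul_nonsing_inv X' hinv, Matrix.mul_one, hG]
end

section
/- Let k ≥ 3, n ≥ 1, let X' be an invertible k × k complex matrix, let R and G be tensors of arity n on domain size k, and set R' = R (X')^{⊗n} and G' = ((X')^{-1})^{⊗n} G. Suppose R'(i_1,…,i_n) = 0 whenever some index i_j lies outside the first two domain values {0,1}, and let Ř and Ǧ be the restrictions of R' and G' to {0,1}, respectively. Then ∑_{j : Fin n → Fin 2} Ǧ(j) · Ř(j) = ∑_{i : Fin n → Fin k} G(i) · R(i); that is, the contraction of Ǧ with Ř equals the contraction of G with R. -/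
open Matrix BigOperators

/-- If `R'` vanishes outside the first two domain values,
then the contraction of `Ǧ` with `Ř` equals the contraction of `G` with `R`. -/
theorem checked_contraction_eq {k n : ℕ} (hk : 3 ≤ k) (hn : 1 ≤ n)
    (X' : Matrix (Fin k) (Fin k) ℂ) (hinv : IsUnit X'.det)
    (R G : (Fin n → Fin k) → ℂ)
    (R' G' : (Fin n → Fin k) → ℂ)
    (hR' : R' = rtrans X' R) (hG' : G' = gtrans X'⁻¹ G)
    (hvan : ∀ i : Fin n → Fin k, (∃ j : Fin n, 2 ≤ (i j : ℕ)) → R' i = 0) :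
    ∑ j : Fin n → Fin 2,
        restrict G' ⟨0, by omega⟩ ⟨1, by omega⟩ j *
          restrict R' ⟨0, by omega⟩ ⟨1, by omega⟩ j =
      ∑ i : Fin n → Fin k, G i * R i := by
  have key : ∀ j m : Fin n → Fin k,
      ∑ i : Fin n → Fin k, ∏ t, (X' (j t) (i t) * X'⁻¹ (i t) (m t))
        = if j = m then 1 else 0 := by
    intro j m
    rw [← Fintype.prod_sum fun t c => X' (j t) c * X'⁻¹ c (m t)]
    have h1 : ∀ t, ∑ c, X' (j t) c * X'⁻¹ c (m t)
        = (1 : Matrix (Fin k) (Fin k) ℂ) (j t) (m t) := by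
      intro t; rw [← Matrix.mul_apply, Matrix.mul_nonsing_inv X' hinv]
    simp_rw [h1, Matrix.one_apply]
    by_cases h : j = m
    · simp [h]
    · obtain ⟨t, ht⟩ := Function.ne_iff.mp h
      rw [Finset.prod_eq_zero (Finset.mem_univ t) (by simp [ht]), if_neg h]
  have hc : ∑ i : Fin n → Fin k, G' i * R' i = ∑ i, G i * R i := by
    subst hR' hG'
    simp only [gtrans, rtrans, Finset.sum_mul, Finset.mul_sum]
    rw [Finset.sum_comm]
    refine (Finset.sum_congr rfl fun y _ => Finset.sum_comm).trans ?_
    have step : ∀ m j : Fin n → Fin k,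
        ∑ i : Fin n → Fin k,
          (∏ t, X'⁻¹ (i t) (m t)) * G m * (R j * ∏ t, X' (j t) (i t))
        = G m * R j * (if j = m then 1 else 0) := by
      intro m j
      rw [← key j m, Finset.mul_sum]
      refine Finset.sum_congr rfl fun i _ => ?_
      rw [Finset.prod_mul_distrib]; ring
    simp_rw [step]
    refine Finset.sum_congr rfl fun y _ => ?_
    simp [mul_comm]
  -- restriction
  set σ : Fin k := ⟨0, by omega⟩ with hσ
  set τ : Fin k := ⟨1, by omega⟩ with hτ
  set e : (Fin n → Fin 2) → (Fin n → Fin k) :=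
    fun j t => if j t = 0 then σ else τ with he
  have hinj : Function.Injective e := by
    intro a b hab
    funext t
    have h := congrFun hab t
    simp only [he] at h
    by_cases ha : a t = 0 <;> by_cases hb : b t = 0 <;>
      simp [ha, hb, hσ, hτ, Fin.ext_iff] at h ⊢ <;> omega
  have himg : ∀ i : Fin n → Fin k, i ∉ Finset.univ.image e → G' i * R' i = 0 := by
    intro i hi
    have : ∃ j : Fin n, 2 ≤ (i j : ℕ) := by
      by_contra hcon
      push_neg at hcon
      apply hi
      refine Finset.mem_image.mpr ⟨fun t => if (i t : ℕ) = 0 then 0 else 1,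
        Finset.mem_univ _, ?_⟩
      funext t
      have := hcon t
      simp only [he]
      by_cases h0 : (i t : ℕ) = 0 <;>
        simp [h0, hσ, hτ, Fin.ext_iff] <;> omega
    rw [hvan i this, mul_zero]
  calc ∑ j : Fin n → Fin 2, restrict G' σ τ j * restrict R' σ τ j
      = ∑ j : Fin n → Fin 2, G' (e j) * R' (e j) := rfl
    _ = ∑ i ∈ Finset.univ.image e, G' i * R' i :=
        (Finset.sum_image (f := fun i => G' i * R' i) fun a _ b _ h => hinj h).symm
    _ = ∑ i : Fin n → Fin k, G' i * R' i :=
        Finset.sum_subset (Finset.subset_univ _) (fun i _ hi => himg i hi)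
    _ = ∑ i : Fin n → Fin k, G i * R i := hc
end
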